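/- arXiv:1210.2661 — 3 statements merged into one kernel-verified Lean document; each statement's English description precedes it below -/
import Mathlib

section
/- Let (A*, d) be a finite-dimensional DGA of PD-type with top degree n. Then the cohomology algebra H*(A) is a finite-dimensional graded commutative ℂ-algebra of PD-type with the same top degree n. In particular the pairing H^i(A) × H^{n-i}(A) → H^n(A) induced by multiplication is non-degenerate. -/
/-- The cohomology algebra of a finite-dimensional DGA of PD-type
with top degree `n` is again a finite-dimensional graded commutative algebra of
PD-type with the same top degree `n`: the top cohomology `Hⁿ` is one-dimensional,
spanned by the (non-exact) class of `v`, and the pairing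
`Hⁱ × H^{n-i} → Hⁿ` induced by multiplication is non-degenerate. -/
theorem cohomology_of_pd_dga_is_pd
    {V : Type} [CommRing V] [Algebra ℂ V] [FiniteDimensional ℂ V]
    (𝒜 : ℤ → Submodule ℂ V) [GradedAlgebra 𝒜]
    (gradedComm : ∀ (p q : ℤ), ∀ a ∈ 𝒜 p, ∀ b ∈ 𝒜 q, a * b = ((-1 : ℂ) ^ (p * q)) • (b * a))
    (n : ℕ) (hn : 1 ≤ n)
    (hneg : ∀ i : ℤ, i < 0 → 𝒜 i = ⊥)
    (htop : ∀ i : ℤ, (n : ℤ) < i → 𝒜 i = ⊥)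
    (hzero : 𝒜 0 = Submodule.span ℂ {(1 : V)})
    (v : V) (hv : v ≠ 0) (hvtop : 𝒜 (n : ℤ) = Submodule.span ℂ {v})
    (hnondeg : ∀ i : ℤ, 0 < i → i < (n : ℤ) →
      ∀ a ∈ 𝒜 i, (∀ b ∈ 𝒜 ((n : ℤ) - i), a * b = 0) → a = 0)
    (d : V →ₗ[ℂ] V)
    (hddeg : ∀ i : ℤ, ∀ a ∈ 𝒜 i, d a ∈ 𝒜 (i + 1))
    (hdd : ∀ x, d (d x) = 0)
    (hleib : ∀ (p : ℤ), ∀ a ∈ 𝒜 p, ∀ b, d (a * b) = d a * b + ((-1 : ℂ) ^ p) • (a * d b))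
    (hdtop : ∀ a ∈ 𝒜 ((n : ℤ) - 1), d a = 0)
    (hdzero : ∀ a ∈ 𝒜 0, d a = 0) :
    -- (i) `Hⁿ(A)` is non-zero: the top class `v` is not exact
    (¬ ∃ c ∈ 𝒜 ((n : ℤ) - 1), v = d c) ∧
    -- (ii) `Hⁿ(A)` is one-dimensional, spanned by the class of `v`
    (∀ w ∈ 𝒜 (n : ℤ), d w = 0 → ∃ (c : ℂ), ∃ e ∈ 𝒜 ((n : ℤ) - 1), w = c • v + d e) ∧
    -- (iii) the induced pairing `Hⁱ(A) × H^{n-i}(A) → Hⁿ(A)` is non-degenerate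
    (∀ i : ℤ, 0 < i → i < (n : ℤ) → ∀ a ∈ 𝒜 i, d a = 0 →
      (∀ b ∈ 𝒜 ((n : ℤ) - i), d b = 0 → ∃ c ∈ 𝒜 ((n : ℤ) - 1), a * b = d c) →
      ∃ c ∈ 𝒜 (i - 1), a = d c) := by
  -- a linear functional detecting `v`
  obtain ⟨f, hfv⟩ : ∃ f : Module.Dual ℂ V, f v ≠ 0 := by
    by_contra h
    push_neg at h
    exact hv ((Module.forall_dual_apply_eq_zero_iff ℂ v).mp h)
  have fkill : ∀ x ∈ 𝒜 (n : ℤ), f x = 0 → x = 0 := by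
    intro x hx hfx
    rw [hvtop, Submodule.mem_span_singleton] at hx
    obtain ⟨c, rfl⟩ := hx
    rw [map_smul, smul_eq_mul] at hfx
    rcases mul_eq_zero.mp hfx with h | h
    · simp [h]
    · exact absurd h hfv
  -- graded multiplication with degree arithmetic
  have hmul : ∀ {p q r : ℤ}, p + q = r → ∀ {x y : V}, x ∈ 𝒜 p → y ∈ 𝒜 q → x * y ∈ 𝒜 r := by
    intro p q r h x y hx hy
    exact h ▸ SetLike.mul_mem_graded hx hy
  have hd' : ∀ {p r : ℤ}, p + 1 = r → ∀ {x : V}, x ∈ 𝒜 p → d x ∈ 𝒜 r := by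
    intro p r h x hx
    exact h ▸ hddeg p x hx
  -- strengthened nondegeneracy via f
  have nd : ∀ k l : ℤ, 0 < k → 0 ≤ l → k + l = (n : ℤ) → ∀ x ∈ 𝒜 k,
      (∀ y ∈ 𝒜 l, f (x * y) = 0) → x = 0 := by
    intro k l hk0 hl0 hkl x hx hxy
    have hxy' : ∀ y ∈ 𝒜 l, x * y = 0 := fun y hy =>
      fkill _ (hmul hkl hx hy) (hxy y hy)
    rcases lt_or_eq_of_le (show k ≤ (n : ℤ) by omega) with hklt | hkeq
    · refine hnondeg k hk0 hklt x hx ?_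
      intro b hb
      exact hxy' b (by rwa [show (n : ℤ) - k = l by omega] at hb)
    · have hl : l = 0 := by omega
      have := hxy' 1 (by rw [hl] at *; exact SetLike.one_mem_graded 𝒜)
      rwa [mul_one] at this
  -- commuting zero products
  have comm0 : ∀ p q : ℤ, ∀ x ∈ 𝒜 p, ∀ y ∈ 𝒜 q, x * y = 0 → y * x = 0 := by
    intro p q x hx y hy hxy
    have h := gradedComm p q x hx y hy
    rw [hxy] at h
    have hs : ((-1 : ℂ) ^ (p * q)) ≠ 0 := zpow_ne_zero _ (by norm_num)
    exact (smul_eq_zero.mp h.symm).resolve_left hs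
  refine ⟨?_, ?_, ?_⟩
  · rintro ⟨c, hc, hvdc⟩
    exact hv (by rw [hvdc, hdtop c hc])
  · intro w hw _
    rw [hvtop, Submodule.mem_span_singleton] at hw
    obtain ⟨c, rfl⟩ := hw
    exact ⟨c, 0, (𝒜 _).zero_mem, by simp⟩
  · intro i hi0 hin a ha hda hann
    set j : ℤ := (n : ℤ) - i with hj
    have hij : i + j = (n : ℤ) := by omega
    -- the pairing as a map into the dual
    let e : ↥(𝒜 i) →ₗ[ℂ] Module.Dual ℂ ↥(𝒜 j) :=
      LinearMap.mk₂ ℂ (fun a b => f ((a : V) * (b : V)))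
        (fun a a' b => by simp [add_mul])
        (fun c a b => by simp [smul_mul_assoc])
        (fun a b b' => by simp [mul_add])
        (fun c a b => by simp [mul_smul_comm])
    have he : ∀ (x : ↥(𝒜 i)) (y : ↥(𝒜 j)), e x y = f ((x : V) * (y : V)) := fun _ _ => rfl
    -- exact elements of 𝒜 i, closed elements of 𝒜 j
    set B : Submodule ℂ ↥(𝒜 i) :=
      Submodule.comap (𝒜 i).subtype (Submodule.map d (𝒜 (i - 1))) with hB
    set W : Submodule ℂ ↥(𝒜 j) :=
      Submodule.comap (𝒜 j).subtype (LinearMap.ker d) with hWdef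
    have hmemB : ∀ x : ↥(𝒜 i), x ∈ B ↔ ∃ c ∈ 𝒜 (i - 1), d c = (x : V) := by
      intro x
      simp [hB, Submodule.mem_comap, Submodule.mem_map]
    have hmemW : ∀ y : ↥(𝒜 j), y ∈ W ↔ d (y : V) = 0 := by
      intro y
      simp [hWdef, Submodule.mem_comap, LinearMap.mem_ker]
    -- closed elements are the coannihilator of the image of exact elements
    have hW : W = (Submodule.map e B).dualCoannihilator := by
      ext b
      rw [hmemW, Submodule.mem_dualCoannihilator]
      constructor
      · rintro hdb φ hφ
        obtain ⟨x, hxB, rfl⟩ := hφ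
        obtain ⟨c, hc, hdc⟩ := (hmemB x).mp hxB
        rw [he]
        have hleibc := hleib (i - 1) c hc (b : V)
        rw [hdb, mul_zero, smul_zero, add_zero] at hleibc
        have hcb : (c * (b : V)) ∈ 𝒜 ((n : ℤ) - 1) := hmul (by omega) hc b.2
        rw [← hdc, ← hleibc, hdtop _ hcb, map_zero]
      · intro hb
        -- show d b = 0 using nondegeneracy in degree j + 1
        have hdb : d (b : V) ∈ 𝒜 (j + 1) := hddeg j _ b.2
        refine nd (j + 1) (i - 1) (by omega) (by omega) (by omega) _ hdb ?_
        intro c hc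
        have hx : d c ∈ 𝒜 i := hd' (by omega) hc
        have hxB : (⟨d c, hx⟩ : ↥(𝒜 i)) ∈ B := (hmemB _).mpr ⟨c, hc, rfl⟩
        have h0 : f (d c * (b : V)) = 0 := hb _ ⟨_, hxB, rfl⟩
        have hleibc := hleib (i - 1) c hc (b : V)
        have hcb : (c * (b : V)) ∈ 𝒜 ((n : ℤ) - 1) := hmul (by omega) hc b.2
        rw [hdtop _ hcb] at hleibc
        have h1 : f (((-1 : ℂ) ^ (i - 1)) • (c * d (b : V))) = 0 := by
          have := congrArg f hleibc
          rw [map_zero, map_add, h0, zero_add] at this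
          exact this.symm
        rw [map_smul, smul_eq_mul, mul_eq_zero] at h1
        have h2 : f (c * d (b : V)) = 0 := by
          rcases h1 with h | h
          · exact absurd h (zpow_ne_zero _ (by norm_num))
          · exact h
        have h3 : c * d (b : V) = 0 := fkill _ (hmul (by omega) hc hdb) h2
        have h4 : d (b : V) * c = 0 := comm0 _ _ c hc _ hdb h3
        rw [h4, map_zero]
    -- a pairs to zero with all closed elements
    have haW : e ⟨a, ha⟩ ∈ W.dualAnnihilator := by
      rw [Submodule.mem_dualAnnihilator]
      intro b hb
      obtain ⟨c, hc, habc⟩ := hann (b : V) b.2 ((hmemW b).mp hb)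
      rw [he, habc, hdtop c hc, map_zero]
    rw [hW, Subspace.dualCoannihilator_dualAnnihilator_eq] at haW
    obtain ⟨x, hxB, hex⟩ := haW
    obtain ⟨c, hc, hdc⟩ := (hmemB x).mp hxB
    refine ⟨c, hc, ?_⟩
    -- a - x pairs to zero with everything, so a = x = d c
    have hsub : a - (x : V) = 0 := by
      have hmem : a - (x : V) ∈ 𝒜 i := (𝒜 i).sub_mem ha x.2
      refine nd i j hi0 (by omega) hij _ hmem ?_
      intro y hy
      have := congrArg (fun φ => φ (⟨y, hy⟩ : ↥(𝒜 j))) hex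
      simp only [he] at this
      rw [sub_mul, map_sub, this, sub_self]
    rw [hdc, ← sub_eq_zero]
    exact hsub
end

section
/- Let (A*, d) be a finite-dimensional DGA of PD-type and B* ⊆ A* a sub-DGA that is itself of PD-type (with the same top degree and a Hermitian metric restricted from A such that the harmonic theory on B is compatible, i.e. ℋ*(B) ⊆ ℋ*(A)). Then the inclusion B* ⊆ A* induces an injection H*(B) ↪ H*(A) on cohomology. -/
/-- The formal adjoint `d* = -⋆̄ ∘ d ∘ ⋆̄` built from a differential `d` and an
antilinear Hodge star operator `s`. -/
noncomputable def dstarOp {V : Type} [CommRing V] [Algebra ℂ V]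
    (d : V →ₗ[ℂ] V) (s : V → V) : V → V :=
  fun x => - s (d (s x))

/-- The Laplacian `Δ = d d* + d* d`. -/
noncomputable def lapOp {V : Type} [CommRing V] [Algebra ℂ V]
    (d : V →ₗ[ℂ] V) (s : V → V) : V → V :=
  fun x => d (dstarOp d s x) + dstarOp d s (d x)

theorem subdga_injects_on_cohomology
    {V : Type} [CommRing V] [Algebra ℂ V] [FiniteDimensional ℂ V]
    (𝒜 : ℤ → Submodule ℂ V) [GradedAlgebra 𝒜]
    (gradedComm : ∀ (p q : ℤ), ∀ a ∈ 𝒜 p, ∀ b ∈ 𝒜 q, a * b = ((-1 : ℂ) ^ (p * q)) • (b * a))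
    (n : ℕ) (hn : 1 ≤ n)
    (hneg : ∀ i : ℤ, i < 0 → 𝒜 i = ⊥)
    (htop : ∀ i : ℤ, (n : ℤ) < i → 𝒜 i = ⊥)
    (hzero : 𝒜 0 = Submodule.span ℂ {(1 : V)})
    (v : V) (hv : v ≠ 0) (hvtop : 𝒜 (n : ℤ) = Submodule.span ℂ {v})
    (hnondeg : ∀ i : ℤ, 0 < i → i < (n : ℤ) →
      ∀ a ∈ 𝒜 i, (∀ b ∈ 𝒜 ((n : ℤ) - i), a * b = 0) → a = 0)
    -- a Hermitian metric compatible with the grading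
    (h : V → V → ℂ)
    (haddl : ∀ x y z, h (x + y) z = h x z + h y z)
    (hsmull : ∀ (c : ℂ) (x y : V), h (c • x) y = c * h x y)
    (hconj : ∀ x y, h y x = (starRingEnd ℂ) (h x y))
    (hpos : ∀ x, x ≠ 0 → 0 < (h x x).re)
    (hcompat : ∀ (i j : ℤ), i ≠ j → ∀ a ∈ 𝒜 i, ∀ b ∈ 𝒜 j, h a b = 0)
    (hvv : h v v = 1)
    -- the differential, making (A*, d) a finite-dimensional DGA of PD-type
    (d : V →ₗ[ℂ] V)
    (hddeg : ∀ i : ℤ, ∀ a ∈ 𝒜 i, d a ∈ 𝒜 (i + 1))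
    (hdd : ∀ x, d (d x) = 0)
    (hleib : ∀ (p : ℤ), ∀ a ∈ 𝒜 p, ∀ b, d (a * b) = d a * b + ((-1 : ℂ) ^ p) • (a * d b))
    (hdtop : ∀ a ∈ 𝒜 ((n : ℤ) - 1), d a = 0)
    (hdzero : ∀ a ∈ 𝒜 0, d a = 0)
    -- the antilinear Hodge star operator
    (s : V → V)
    (hsadd : ∀ x y, s (x + y) = s x + s y)
    (hssmul : ∀ (c : ℂ) (x : V), s (c • x) = (starRingEnd ℂ) c • s x)
    (hsdeg : ∀ i : ℤ, ∀ a ∈ 𝒜 i, s a ∈ 𝒜 ((n : ℤ) - i))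
    (hsdef : ∀ i : ℤ, ∀ α ∈ 𝒜 i, ∀ β ∈ 𝒜 i, α * s β = h α β • v)
    -- `B` is a graded sub-DGA of `A`
    (B : Subalgebra ℂ V)
    (hBd : ∀ x ∈ B, d x ∈ B)
    (hBgr : ∀ x ∈ B, ∀ i : ℤ, (DirectSum.decompose 𝒜 x i : V) ∈ B)
    -- `B` is itself of PD-type with the same top degree `n`
    (vB : V) (hvB : vB ≠ 0) (hvBtop : vB ∈ 𝒜 (n : ℤ)) (hvBmem : vB ∈ B)
    (hvBspan : ∀ w ∈ 𝒜 (n : ℤ), w ∈ B → ∃ c : ℂ, w = c • vB)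
    (hBnondeg : ∀ i : ℤ, 0 < i → i < (n : ℤ) → ∀ a ∈ 𝒜 i, a ∈ B →
      (∀ b ∈ 𝒜 ((n : ℤ) - i), b ∈ B → a * b = 0) → a = 0)
    (hvBnorm : h vB vB = 1)
    -- the Hodge star operator of `B` for the restricted metric, and the
    -- compatibility of the harmonic theories: `ℋ*(B) ⊆ ℋ*(A)`
    (sB : V → V)
    (hsBadd : ∀ x y, sB (x + y) = sB x + sB y)
    (hsBsmul : ∀ (c : ℂ) (x : V), sB (c • x) = (starRingEnd ℂ) c • sB x)
    (hsBdeg : ∀ i : ℤ, ∀ a ∈ 𝒜 i, a ∈ B → sB a ∈ 𝒜 ((n : ℤ) - i) ∧ sB a ∈ B)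
    (hsBdef : ∀ i : ℤ, ∀ α ∈ 𝒜 i, α ∈ B → ∀ β ∈ 𝒜 i, β ∈ B → α * sB β = h α β • vB)
    (hharm : ∀ x ∈ B, lapOp d sB x = 0 → lapOp d s x = 0) :
    -- conclusion: the inclusion `B ⊆ A` induces an injection `H*(B) ↪ H*(A)`
    ∀ p : ℤ, ∀ b ∈ 𝒜 p, b ∈ B → d b = 0 →
      (∃ a ∈ 𝒜 (p - 1), b = d a) →
      ∃ c ∈ 𝒜 (p - 1), c ∈ B ∧ b = d c := by

  classical
  intro p b hbA hbB hdb hex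
  obtain ⟨a, haA, hba⟩ := hex
  -- basic facts about h, s, sB at zero
  have h0l : ∀ z, h 0 z = 0 := by
    intro z
    have h2 := haddl 0 0 z
    rw [add_zero] at h2
    exact (left_eq_add.mp h2)
  have h0r : ∀ z, h z 0 = 0 := by
    intro z; rw [hconj, h0l]; simp
  have s0 : s 0 = 0 := by
    have := hssmul 0 0
    simpa using this
  have sB0 : sB 0 = 0 := by
    have := hsBsmul 0 0
    simpa using this
  have hzero' : ∀ x : V, h x x = 0 → x = 0 := by
    intro x hx
    by_contra hne
    have := hpos x hne
    rw [hx] at this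
    simp at this
  -- set up the inner product space structure
  letI core : InnerProductSpace.Core ℂ V :=
    { inner := fun x y => h y x
      conj_inner_symm := fun x y => (hconj x y).symm
      re_inner_nonneg := by
        intro x
        by_cases hx : x = 0
        · simp only [hx, h0l]; simp
        · exact le_of_lt (hpos x hx)
      add_left := by
        intro x y z
        show h z (x + y) = h z x + h z y
        rw [hconj, haddl, map_add, ← hconj, ← hconj]
      smul_left := by
        intro x y r
        show h y (r • x) = (starRingEnd ℂ) r * h y x
        rw [hconj, hsmull, map_mul, ← hconj]
      definite := fun x hx => hzero' x hx }
  letI : NormedAddCommGroup V := core.toNormedAddCommGroup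
  letI : InnerProductSpace ℂ V := InnerProductSpace.ofCore core.toCore
  -- the space of coboundaries coming from B in degree p
  set D : Submodule ℂ V := Submodule.map (d : V →ₗ[ℂ] V)
      (Subalgebra.toSubmodule B ⊓ 𝒜 (p - 1)) with hD
  haveI : CompleteSpace D := FiniteDimensional.complete ℂ D
  obtain ⟨x, hxD, β, hβorth, hbx⟩ := D.exists_add_mem_mem_orthogonal b
  obtain ⟨c, hc, hdc⟩ := hxD
  obtain ⟨hcB, hcA⟩ := hc
  have hcB : c ∈ B := hcB
  -- basic facts about β
  have hdcA : d c ∈ 𝒜 p := by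
    have := hddeg (p - 1) c hcA
    rwa [sub_add_cancel] at this
  have hβeq : β = b - d c := by rw [← hdc] at hbx; rw [hbx]; abel
  have hβA : β ∈ 𝒜 p := by rw [hβeq]; exact sub_mem hbA hdcA
  have hβB : β ∈ B := by
    rw [hβeq]; exact sub_mem hbB (hBd c hcB)
  have hdβ : d β = 0 := by
    rw [hβeq, map_sub, hdb, hdd, sub_zero]
  have horth : ∀ u ∈ D, h β u = 0 := by
    intro u hu
    exact (Submodule.mem_orthogonal D β).mp hβorth u hu
  -- Step 1: d (sB β) = 0
  obtain ⟨hσA, hσB⟩ := hsBdeg p β hβA hβB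
  have hηA : d (sB β) ∈ 𝒜 ((n : ℤ) - p + 1) := hddeg _ _ hσA
  have hηB : d (sB β) ∈ B := hBd _ hσB
  obtain ⟨hτA, hτB⟩ := hsBdeg _ _ hηA hηB
  have hτA' : sB (d (sB β)) ∈ 𝒜 (p - 1) := by
    have he : (n : ℤ) - ((n : ℤ) - p + 1) = p - 1 := by ring
    rwa [he] at hτA
  have hdτA : d (sB (d (sB β))) ∈ 𝒜 p := by
    have := hddeg _ _ hτA'
    rwa [sub_add_cancel] at this
  have hdτD : d (sB (d (sB β))) ∈ D := ⟨sB (d (sB β)), ⟨hτB, hτA'⟩, rfl⟩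
  have key1 : d (sB (d (sB β))) * sB β = 0 := by
    rw [hsBdef p _ hdτA (hBd _ hτB) β hβA hβB]
    have : h (d (sB (d (sB β)))) β = 0 := by
      rw [hconj, horth _ hdτD]; simp
    rw [this, zero_smul]
  have key2 : sB β * d (sB (d (sB β))) = 0 := by
    rw [gradedComm _ _ _ hσA _ hdτA, key1, smul_zero]
  have hστtop : sB β * sB (d (sB β)) ∈ 𝒜 ((n : ℤ) - 1) := by
    have := SetLike.mul_mem_graded hσA hτA'
    have he : (n : ℤ) - p + (p - 1) = (n : ℤ) - 1 := by ring
    rwa [he] at this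
  have hleib1 := hleib ((n : ℤ) - p) (sB β) hσA (sB (d (sB β)))
  rw [hdtop _ hστtop, key2, smul_zero, add_zero] at hleib1
  have hηzero : d (sB β) = 0 := by
    have hpair := hsBdef _ _ hηA hηB _ hηA hηB
    rw [← hleib1] at hpair
    have : h (d (sB β)) (d (sB β)) = 0 := by
      have := hpair.symm
      rw [smul_eq_zero] at this
      rcases this with h1 | h1
      · exact h1
      · exact absurd h1 hvB
    exact hzero' _ this
  -- Step 2: β is harmonic for (d, sB), hence for (d, s)
  have hlapB : lapOp d sB β = 0 := by
    simp only [lapOp, dstarOp]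
    rw [hηzero, hdβ, sB0]
    simp [sB0]
  have hlapA : lapOp d s β = 0 := hharm β hβB hlapB
  have hdsds : d (s (d (s β))) = 0 := by
    simp only [lapOp, dstarOp] at hlapA
    rw [hdβ, s0, map_zero, s0, neg_zero, add_zero, map_neg, neg_eq_zero] at hlapA
    exact hlapA
  -- Step 3: d (s β) = 0
  have hσ'A : s β ∈ 𝒜 ((n : ℤ) - p) := hsdeg p β hβA
  have hη'A : d (s β) ∈ 𝒜 ((n : ℤ) - p + 1) := hddeg _ _ hσ'A
  have hτ'A : s (d (s β)) ∈ 𝒜 (p - 1) := by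
    have := hsdeg _ _ hη'A
    have he : (n : ℤ) - ((n : ℤ) - p + 1) = p - 1 := by ring
    rwa [he] at this
  have hσ'τ'top : s β * s (d (s β)) ∈ 𝒜 ((n : ℤ) - 1) := by
    have := SetLike.mul_mem_graded hσ'A hτ'A
    have he : (n : ℤ) - p + (p - 1) = (n : ℤ) - 1 := by ring
    rwa [he] at this
  have hleib2 := hleib ((n : ℤ) - p) (s β) hσ'A (s (d (s β)))
  rw [hdtop _ hσ'τ'top, hdsds, mul_zero, smul_zero, add_zero] at hleib2
  have hη'zero : d (s β) = 0 := by
    have hpair := hsdef _ _ hη'A _ hη'A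
    rw [← hleib2] at hpair
    have : h (d (s β)) (d (s β)) = 0 := by
      have := hpair.symm
      rw [smul_eq_zero] at this
      rcases this with h1 | h1
      · exact h1
      · exact absurd h1 hv
    exact hzero' _ this
  -- Step 4: β = 0
  have hacA : a - c ∈ 𝒜 (p - 1) := sub_mem haA hcA
  have hβexact : β = d (a - c) := by
    rw [map_sub, ← hba, hβeq]
  have hactop : (a - c) * s β ∈ 𝒜 ((n : ℤ) - 1) := by
    have := SetLike.mul_mem_graded hacA hσ'A
    have he : p - 1 + ((n : ℤ) - p) = (n : ℤ) - 1 := by ring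
    rwa [he] at this
  have hleib3 := hleib (p - 1) (a - c) hacA (s β)
  rw [hdtop _ hactop, hη'zero, mul_zero, smul_zero, add_zero, ← hβexact] at hleib3
  have hβzero : β = 0 := by
    have hpair := hsdef p β hβA β hβA
    rw [← hleib3] at hpair
    have : h β β = 0 := by
      have := hpair.symm
      rw [smul_eq_zero] at this
      rcases this with h1 | h1
      · exact h1
      · exact absurd h1 hv
    exact hzero' _ this
  refine ⟨c, hcA, hcB, ?_⟩
  rw [hbx, hβzero, add_zero, hdc]
end

section
/- Let (A^{*,*}, ∂, ∂̄) be a finite-dimensional bidifferential bigraded algebra whose total complex (Tot A, ∂+∂̄) is a finite-dimensional DGA of PD-type, and let B^{*,*} ⊆ A^{*,*} be a sub-BBA with the same property (harmonic spaces compatible at every stage). Consider the spectral sequences E_r^{p,q}(A) and E_r^{p,q}(B) of the double complexes (filtering by the first degree). Then for every r ≥ 0: (a) the total complexes Tot E_r(A) and Tot E_r(B), with differential d_r, are finite-dimensional DGAs of PD-type; and (b) the inclusion B ⊆ A induces an injection E_r^{p,q}(B) ↪ E_r^{p,q}(A). -/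
/-- A graded `ℂ`-algebra `V` with grading `𝒜`, top degree `n` and differential
`d` is a DGA of Poincaré duality type. -/
def IsPDTypeDGA {V : Type} [CommRing V] [Algebra ℂ V]
    (𝒜 : ℤ → Submodule ℂ V) (n : ℕ) (d : V →ₗ[ℂ] V) : Prop :=
  (∀ i : ℤ, i < 0 → 𝒜 i = ⊥) ∧
  (∀ i : ℤ, (n : ℤ) < i → 𝒜 i = ⊥) ∧
  (𝒜 0 = Submodule.span ℂ {(1 : V)}) ∧
  (∃ v : V, v ≠ 0 ∧ 𝒜 (n : ℤ) = Submodule.span ℂ {v}) ∧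
  (∀ i : ℤ, 0 < i → i < (n : ℤ) →
    ∀ a ∈ 𝒜 i, (∀ b ∈ 𝒜 ((n : ℤ) - i), a * b = 0) → a = 0) ∧
  (∀ a ∈ 𝒜 ((n : ℤ) - 1), d a = 0) ∧
  (∀ a ∈ 𝒜 0, d a = 0)

/-- The harmonic theories of `(W, dW)` and `(V, dV)` are compatible along
`f : W →ₗ V`: there are compatible Hermitian metrics and Hodge star operators on
both sides such that `f` maps harmonic elements to harmonic elements,
`ℋ*(W) ⊆ ℋ*(V)`. -/
def HarmonicCompatible {W V : Type} [CommRing W] [Algebra ℂ W]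
    [CommRing V] [Algebra ℂ V]
    (grW : ℤ → Submodule ℂ W) (grV : ℤ → Submodule ℂ V) (n : ℕ)
    (dW : W →ₗ[ℂ] W) (dV : V →ₗ[ℂ] V) (f : W →ₗ[ℂ] V) : Prop :=
  ∃ (hV : V → V → ℂ) (sV : V → V) (vV : V) (hW : W → W → ℂ) (sW : W → W) (vW : W),
    (∀ x y z, hV (x + y) z = hV x z + hV y z) ∧
    (∀ (c : ℂ) (x y : V), hV (c • x) y = c * hV x y) ∧
    (∀ x y, hV y x = (starRingEnd ℂ) (hV x y)) ∧
    (∀ x, x ≠ 0 → 0 < (hV x x).re) ∧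
    (∀ i j : ℤ, i ≠ j → ∀ a ∈ grV i, ∀ b ∈ grV j, hV a b = 0) ∧
    vV ∈ grV (n : ℤ) ∧ hV vV vV = 1 ∧
    (∀ x y, sV (x + y) = sV x + sV y) ∧
    (∀ (c : ℂ) (x : V), sV (c • x) = (starRingEnd ℂ) c • sV x) ∧
    (∀ i : ℤ, ∀ a ∈ grV i, sV a ∈ grV ((n : ℤ) - i)) ∧
    (∀ i : ℤ, ∀ α ∈ grV i, ∀ β ∈ grV i, α * sV β = hV α β • vV) ∧
    (∀ x y z, hW (x + y) z = hW x z + hW y z) ∧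
    (∀ (c : ℂ) (x y : W), hW (c • x) y = c * hW x y) ∧
    (∀ x y, hW y x = (starRingEnd ℂ) (hW x y)) ∧
    (∀ x, x ≠ 0 → 0 < (hW x x).re) ∧
    (∀ i j : ℤ, i ≠ j → ∀ a ∈ grW i, ∀ b ∈ grW j, hW a b = 0) ∧
    vW ∈ grW (n : ℤ) ∧ hW vW vW = 1 ∧
    (∀ x y, sW (x + y) = sW x + sW y) ∧
    (∀ (c : ℂ) (x : W), sW (c • x) = (starRingEnd ℂ) c • sW x) ∧
    (∀ i : ℤ, ∀ a ∈ grW i, sW a ∈ grW ((n : ℤ) - i)) ∧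
    (∀ i : ℤ, ∀ α ∈ grW i, ∀ β ∈ grW i, α * sW β = hW α β • vW) ∧
    (∀ x : W, lapOp dW sW x = 0 → lapOp dV sV (f x) = 0)


open DirectSum

section Proj
variable {V : Type} [CommRing V] [Algebra ℂ V]
variable (gr : ℤ → Submodule ℂ V) [GradedAlgebra gr]

/-- Projection onto the degree-`i` component, as a linear map. -/
noncomputable def grProj (i : ℤ) : V →ₗ[ℂ] V :=
  (gr i).subtype ∘ₗ (DirectSum.component ℂ ℤ (fun j => ↥(gr j)) i) ∘ₗ
    (DirectSum.decomposeLinearEquiv gr : V →ₗ[ℂ] ⨁ j, ↥(gr j))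

lemma grProj_apply (i : ℤ) (x : V) : grProj gr i x = (DirectSum.decompose gr x i : V) := rfl

lemma grProj_mem (i : ℤ) (x : V) : grProj gr i x ∈ gr i := (DirectSum.decompose gr x i).2

lemma grProj_of_mem_same {i : ℤ} {x : V} (hx : x ∈ gr i) : grProj gr i x = x :=
  DirectSum.decompose_of_mem_same gr hx

lemma grProj_of_mem_ne {i j : ℤ} {x : V} (hx : x ∈ gr i) (h : i ≠ j) : grProj gr j x = 0 := by
  rw [grProj_apply, DirectSum.decompose_of_mem_ne gr hx h]

lemma sum_grProj (x : V) : ∃ S : Finset ℤ, ∑ j ∈ S, grProj gr j x = x := by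
  classical
  refine ⟨(DirectSum.decompose gr x).support, ?_⟩
  simpa [grProj_apply] using DirectSum.sum_support_decompose gr x

/-- If a homogeneous element of degree `i` is exact, it is the differential of a
homogeneous element of degree `i - 1`. -/
lemma exact_proj (d : V →ₗ[ℂ] V) (hdeg : ∀ i : ℤ, ∀ x ∈ gr i, d x ∈ gr (i + 1))
    {i : ℤ} {x : V} (hx : x ∈ gr i) {y : V} (hxy : x = d y) :
    ∃ w ∈ gr (i - 1), x = d w := by
  classical
  refine ⟨grProj gr (i - 1) y, grProj_mem gr _ y, ?_⟩
  obtain ⟨S, hS⟩ := sum_grProj gr y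
  have hxsum : x = ∑ j ∈ S, d (grProj gr j y) := by
    calc x = d y := hxy
    _ = d (∑ j ∈ S, grProj gr j y) := by rw [hS]
    _ = ∑ j ∈ S, d (grProj gr j y) := map_sum _ _ _
  have hproj : x = ∑ j ∈ S, grProj gr i (d (grProj gr j y)) := by
    calc x = grProj gr i x := (grProj_of_mem_same gr hx).symm
    _ = grProj gr i (∑ j ∈ S, d (grProj gr j y)) := by rw [← hxsum]
    _ = ∑ j ∈ S, grProj gr i (d (grProj gr j y)) := map_sum _ _ _
  rw [hproj]
  by_cases hmem : i - 1 ∈ S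
  · rw [Finset.sum_eq_single_of_mem (i-1) hmem
      (fun j hj hne => grProj_of_mem_ne gr (hdeg _ _ (grProj_mem gr j y)) (by omega))]
    exact grProj_of_mem_same gr (by simpa using hdeg _ _ (grProj_mem gr (i-1) y))
  · have hz : ∀ j ∈ S, grProj gr i (d (grProj gr j y)) = 0 := fun j hj =>
      grProj_of_mem_ne gr (hdeg _ _ (grProj_mem gr j y)) (by rintro rfl; exact hmem (by simpa using hj))
    rw [Finset.sum_eq_zero hz]
    have hz2 : grProj gr (i-1) y = 0 := by
      conv_lhs => rw [← hS]
      rw [map_sum]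
      exact Finset.sum_eq_zero fun j hj =>
        grProj_of_mem_ne gr (grProj_mem gr j y) (by rintro rfl; exact hmem hj)
    rw [hz2, map_zero]
end Proj


noncomputable def pairL {V : Type} [CommRing V] [Algebra ℂ V] (φ : V →ₗ[ℂ] ℂ)
    (p q : Submodule ℂ V) : ↥p →ₗ[ℂ] Module.Dual ℂ ↥q :=
  (((LinearMap.mul ℂ V).compr₂ φ).domRestrict p).compl₂ q.subtype

@[simp] lemma pairL_apply {V : Type} [CommRing V] [Algebra ℂ V] (φ : V →ₗ[ℂ] ℂ)
    (p q : Submodule ℂ V) (a : ↥p) (b : ↥q) : pairL φ p q a b = φ ((a : V) * (b : V)) := rfl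

noncomputable def pairT {V : Type} [CommRing V] [Algebra ℂ V] (φ : V →ₗ[ℂ] ℂ)
    (p : Submodule ℂ V) {q : Submodule ℂ V} {G : Submodule ℂ V} (hG : G ≤ q) :
    ↥p →ₗ[ℂ] Module.Dual ℂ ↥G :=
  (Submodule.inclusion hG).dualMap.comp (pairL φ p q)

@[simp] lemma pairT_apply {V : Type} [CommRing V] [Algebra ℂ V] (φ : V →ₗ[ℂ] ℂ)
    (p : Submodule ℂ V) {q : Submodule ℂ V} {G : Submodule ℂ V} (hG : G ≤ q)
    (a : ↥p) (g : ↥G) : pairT φ p hG a g = φ ((a : V) * (g : V)) := rfl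

section Key
variable {V : Type} [CommRing V] [Algebra ℂ V] [FiniteDimensional ℂ V]
variable (gr : ℤ → Submodule ℂ V) [GradedAlgebra gr]
variable (n : ℕ) (d : V →ₗ[ℂ] V)

lemma neg_one_zpow_mul_self (p : ℤ) : ((-1 : ℂ) ^ p) * ((-1 : ℂ) ^ p) = 1 := by
  rw [← zpow_add₀ (by norm_num : (-1:ℂ) ≠ 0), show p + p = 2 * p by ring, zpow_mul]
  norm_num

lemma key_exact
    (hdeg : ∀ i : ℤ, ∀ x ∈ gr i, d x ∈ gr (i+1))
    (hleib : ∀ p : ℤ, ∀ x ∈ gr p, ∀ y, d (x * y) = d x * y + ((-1:ℂ) ^ p) • (x * d y))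
    (hpd : IsPDTypeDGA gr n d)
    {i : ℤ} (hi0 : 0 ≤ i) (hin : i ≤ (n:ℤ))
    {x : V} (hx : x ∈ gr i)
    (hann : ∀ z ∈ gr ((n:ℤ) - i), d z = 0 → x * z = 0) :
    ∃ w ∈ gr (i - 1), x = d w := by
  classical
  obtain ⟨hneg, hbig, h0, ⟨v, hv0, hvn⟩, hnd, htop1, hbot⟩ := hpd
  -- a functional picking out the coefficient of `v`
  obtain ⟨φ, hφ⟩ := (LinearMap.toSpanSingleton ℂ V v).exists_leftInverse_of_injective
    (LinearMap.ker_toSpanSingleton (R := ℂ) (M := V) hv0)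
  have hφv : φ v = 1 := by
    have := LinearMap.congr_fun hφ 1
    simpa [LinearMap.toSpanSingleton_apply] using this
  have htopform : ∀ u ∈ gr (n:ℤ), u = φ u • v := by
    intro u hu
    rw [hvn, Submodule.mem_span_singleton] at hu
    obtain ⟨c, rfl⟩ := hu
    rw [map_smul, smul_eq_mul, hφv, mul_one]
  have hmem_top : ∀ (p q : ℤ), p + q = (n:ℤ) → ∀ a ∈ gr p, ∀ b ∈ gr q, a * b ∈ gr (n:ℤ) := by
    intro p q hpq a ha b hb
    have := SetLike.mul_mem_graded ha hb
    rwa [hpq] at this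
  -- nondegeneracy of the φ-pairing in each degree
  have hND : ∀ j : ℤ, 0 ≤ j → j ≤ (n:ℤ) → ∀ a ∈ gr j,
      (∀ b ∈ gr ((n:ℤ) - j), φ (a * b) = 0) → a = 0 := by
    intro j hj0 hjn a ha hab
    have hzero : ∀ b ∈ gr ((n:ℤ) - j), a * b = 0 := by
      intro b hb
      have h1 : a * b ∈ gr (n:ℤ) := hmem_top j _ (by ring) a ha b hb
      rw [htopform _ h1, hab b hb, zero_smul]
    rcases eq_or_lt_of_le hj0 with h0j | h0j
    · -- j = 0
      subst h0j
      rw [h0, Submodule.mem_span_singleton] at ha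
      obtain ⟨c, rfl⟩ := ha
      have hvmem : v ∈ gr ((n:ℤ) - 0) := by
        rw [show (n:ℤ) - 0 = (n:ℤ) by ring, hvn]
        exact Submodule.mem_span_singleton_self v
      have := hzero v hvmem
      rw [smul_mul_assoc, one_mul, smul_eq_zero] at this
      rcases this with h | h
      · rw [h, zero_smul]
      · exact absurd h hv0
    rcases eq_or_lt_of_le hjn with hjn' | hjn'
    · -- j = n
      have h1mem : (1 : V) ∈ gr ((n:ℤ) - j) := by
        rw [hjn', sub_self]
        exact SetLike.one_mem_graded gr
      have := hzero 1 h1mem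
      rwa [mul_one] at this
    · exact hnd j h0j hjn' a ha hzero
  -- degenerate cases `i = 0` and `i = n`
  rcases eq_or_lt_of_le hi0 with h0i | h0i
  · subst h0i
    have hvmem : v ∈ gr ((n:ℤ) - 0) := by
      rw [show (n:ℤ) - 0 = (n:ℤ) by ring, hvn]
      exact Submodule.mem_span_singleton_self v
    have hdv : d v = 0 := by
      have : d v ∈ gr ((n:ℤ) + 1) := hdeg _ v (by rw [hvn]; exact Submodule.mem_span_singleton_self v)
      rw [hbig _ (by omega)] at this
      simpa using this
    have hx0 : x = 0 := by
      rw [h0, Submodule.mem_span_singleton] at hx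
      obtain ⟨c, rfl⟩ := hx
      have := hann v hvmem hdv
      rw [smul_mul_assoc, one_mul, smul_eq_zero] at this
      rcases this with h | h
      · rw [h, zero_smul]
      · exact absurd h hv0
    exact ⟨0, Submodule.zero_mem _, by rw [hx0, map_zero]⟩
  rcases eq_or_lt_of_le hin with hin' | hin'
  · have h1mem : (1 : V) ∈ gr ((n:ℤ) - i) := by
      rw [hin', sub_self]
      exact SetLike.one_mem_graded gr
    have hd1 : d (1 : V) = 0 := hbot 1 (SetLike.one_mem_graded gr)
    have hx0 : x = 0 := by
      have := hann 1 h1mem hd1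
      rwa [mul_one] at this
    exact ⟨0, Submodule.zero_mem _, by rw [hx0, map_zero]⟩
  -- middle case `0 < i < n`
  have hinjL : ∀ j : ℤ, 0 ≤ j → j ≤ (n:ℤ) →
      Function.Injective (pairL φ (gr j) (gr ((n:ℤ)-j))) := by
    intro j hj0 hjn
    apply (injective_iff_map_eq_zero _).mpr
    intro a ha
    apply Subtype.ext
    refine hND j hj0 hjn a.1 a.2 fun b hb => ?_
    simpa using LinearMap.congr_fun ha ⟨b, hb⟩
  have hinjR : ∀ j : ℤ, 0 ≤ j → j ≤ (n:ℤ) →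
      Function.Injective (pairL φ (gr ((n:ℤ)-j)) (gr j)) := by
    intro j hj0 hjn
    apply (injective_iff_map_eq_zero _).mpr
    intro b hb
    apply Subtype.ext
    refine hND ((n:ℤ)-j) (by omega) (by omega) b.1 b.2 fun a ha' => ?_
    have haj : a ∈ gr j := by rwa [show (n:ℤ) - ((n:ℤ)-j) = j by ring] at ha'
    simpa using LinearMap.congr_fun hb ⟨a, haj⟩
  have hfr : ∀ j : ℤ, 0 ≤ j → j ≤ (n:ℤ) →
      Module.finrank ℂ ↥(gr j) = Module.finrank ℂ ↥(gr ((n:ℤ)-j)) := by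
    intro j hj0 hjn
    apply le_antisymm
    · have := LinearMap.finrank_le_finrank_of_injective (hinjL j hj0 hjn)
      rwa [Subspace.dual_finrank_eq] at this
    · have := LinearMap.finrank_le_finrank_of_injective (hinjR j hj0 hjn)
      rwa [Subspace.dual_finrank_eq] at this
  have hsurjL : ∀ j : ℤ, 0 ≤ j → j ≤ (n:ℤ) →
      Function.Surjective (pairL φ (gr j) (gr ((n:ℤ)-j))) := by
    intro j hj0 hjn
    have hfr' : Module.finrank ℂ ↥(gr j) = Module.finrank ℂ (Module.Dual ℂ ↥(gr ((n:ℤ)-j))) := by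
      rw [Subspace.dual_finrank_eq]; exact hfr j hj0 hjn
    exact (LinearMap.injective_iff_surjective_of_finrank_eq_finrank hfr').mp (hinjL j hj0 hjn)
  have count : ∀ (j : ℤ), 0 ≤ j → j ≤ (n:ℤ) → ∀ (G : Submodule ℂ V) (hG : G ≤ gr ((n:ℤ)-j)),
      Module.finrank ℂ ↥(LinearMap.ker (pairT φ (gr j) hG))
        + Module.finrank ℂ ↥G = Module.finrank ℂ ↥(gr j) := by
    intro j hj0 hjn G hG
    have hs : Function.Surjective (pairT φ (gr j) hG) :=
      (LinearMap.dualMap_surjective_of_injective (Submodule.inclusion_injective hG)).comp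
        (hsurjL j hj0 hjn)
    have h := LinearMap.finrank_range_add_finrank_ker (pairT φ (gr j) hG)
    rw [LinearMap.range_eq_top.mpr hs, finrank_top, Subspace.dual_finrank_eq] at h
    omega
  -- Stokes formula in degrees `(i-1, n-i)`
  have hstokes : ∀ w ∈ gr (i-1), ∀ z ∈ gr ((n:ℤ)-i),
      d w * z + ((-1:ℂ) ^ (i-1)) • (w * d z) = 0 := by
    intro w hw z hz
    have h1 : w * z ∈ gr ((n:ℤ)-1) := by
      have := SetLike.mul_mem_graded hw hz
      rwa [show (i-1) + ((n:ℤ)-i) = (n:ℤ)-1 by ring] at this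
    rw [← hleib (i-1) w hw z]
    exact htop1 _ h1
  -- the four submodules
  have hZnile : gr ((n:ℤ)-i) ⊓ LinearMap.ker d ≤ gr ((n:ℤ)-i) := inf_le_left
  have hBle : Submodule.map d (gr ((n:ℤ)-i)) ≤ gr ((n:ℤ)-(i-1)) := by
    rintro u ⟨z, hz, rfl⟩
    have := hdeg _ z hz
    rwa [show (n:ℤ)-i+1 = (n:ℤ)-(i-1) by ring] at this
  -- kernel of `T'` is the space of closed elements of degree `i-1`
  have hkerT' : Submodule.map (gr (i-1)).subtype (LinearMap.ker (pairT φ (gr (i-1)) hBle))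
      = gr (i-1) ⊓ LinearMap.ker d := by
    ext w
    constructor
    · rintro ⟨⟨w, hw⟩, hker, rfl⟩
      simp only [Submodule.subtype_apply]
      refine Submodule.mem_inf.mpr ⟨hw, LinearMap.mem_ker.mpr ?_⟩
      have hdw : d w ∈ gr i := by
        have := hdeg _ w hw
        rwa [show i - 1 + 1 = i by ring] at this
      refine hND i (by omega) (by omega) _ hdw fun b hb => ?_
      have hdb : d b ∈ Submodule.map d (gr ((n:ℤ)-i)) := ⟨b, hb, rfl⟩
      have h1 : φ (w * d b) = 0 := by
        simpa using LinearMap.congr_fun (LinearMap.mem_ker.mp hker) ⟨d b, hdb⟩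
      have h2 := hstokes w hw b hb
      have h3 : d w * b = -(((-1:ℂ) ^ (i-1)) • (w * d b)) := by linear_combination (norm := module) h2
      rw [h3, map_neg, map_smul, smul_eq_mul, h1, mul_zero, neg_zero]
    · intro hw
      obtain ⟨hw1, hw2⟩ := Submodule.mem_inf.mp hw
      have hdw0 : d w = 0 := LinearMap.mem_ker.mp hw2
      refine ⟨⟨w, hw1⟩, LinearMap.mem_ker.mpr ?_, rfl⟩
      apply LinearMap.ext
      rintro ⟨u, hu⟩
      obtain ⟨z, hz, rfl⟩ := hu
      have h2 := hstokes w hw1 z hz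
      have h3 : w * d z = 0 := by
        have h4 : ((-1:ℂ) ^ (i-1)) • (w * d z) = 0 := by
          rw [hdw0, zero_mul, zero_add] at h2; exact h2
        have h5 : ((-1:ℂ) ^ (i-1)) ≠ 0 := by
          intro h; have := neg_one_zpow_mul_self (i-1); rw [h, mul_zero] at this; norm_num at this
        exact (smul_eq_zero.mp h4).resolve_left h5
      simpa using congrArg φ h3
  -- rank–nullity for `d` restricted to a graded piece
  have dcount : ∀ j : ℤ,
      Module.finrank ℂ ↥(Submodule.map d (gr j)) +
        Module.finrank ℂ ↥(gr j ⊓ LinearMap.ker d) = Module.finrank ℂ ↥(gr j) := by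
    intro j
    have h := LinearMap.finrank_range_add_finrank_ker (d.domRestrict (gr j))
    have hr : LinearMap.range (d.domRestrict (gr j)) = Submodule.map d (gr j) := by
      ext u
      simp [LinearMap.mem_range, Submodule.mem_map, Subtype.exists, LinearMap.domRestrict_apply]
    have hk : Submodule.map (gr j).subtype (LinearMap.ker (d.domRestrict (gr j)))
        = gr j ⊓ LinearMap.ker d := by
      ext u
      simp only [Submodule.mem_map, LinearMap.mem_ker, LinearMap.domRestrict_apply,
        Submodule.mem_inf, Subtype.exists, Submodule.coe_subtype]
      constructor
      · rintro ⟨a, ha, hda, rfl⟩; exact ⟨ha, hda⟩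
      · rintro ⟨hu, hdu⟩; exact ⟨u, hu, hdu, rfl⟩
    have hkfr : Module.finrank ℂ ↥(LinearMap.ker (d.domRestrict (gr j)))
        = Module.finrank ℂ ↥(gr j ⊓ LinearMap.ker d) := by
      rw [← hk, Submodule.finrank_map_subtype_eq]
    rw [hr, hkfr] at h
    exact h
  -- assemble the dimension count
  have hc1 := count i (by omega) (by omega) _ hZnile
  have hc2 := count (i-1) (by omega) (by omega) _ hBle
  have hc3 := dcount ((n:ℤ)-i)
  have hc4 := dcount (i-1)
  have hfri := hfr i (by omega) (by omega)
  have hkerT'fr : Module.finrank ℂ ↥(LinearMap.ker (pairT φ (gr (i-1)) hBle))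
      = Module.finrank ℂ ↥(gr (i-1) ⊓ LinearMap.ker d) := by
    rw [← hkerT', Submodule.finrank_map_subtype_eq]
  -- the annihilator submodule
  have hKfr : Module.finrank ℂ
        ↥(Submodule.map (gr i).subtype (LinearMap.ker (pairT φ (gr i) hZnile)))
      = Module.finrank ℂ ↥(LinearMap.ker (pairT φ (gr i) hZnile)) :=
    Submodule.finrank_map_subtype_eq _ _
  have hfinal : Module.finrank ℂ ↥(Submodule.map d (gr (i-1))) = Module.finrank ℂ
      ↥(Submodule.map (gr i).subtype (LinearMap.ker (pairT φ (gr i) hZnile))) := by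
    omega
  -- `B_i ⊆ K`
  have hBiK : Submodule.map d (gr (i-1))
      ≤ Submodule.map (gr i).subtype (LinearMap.ker (pairT φ (gr i) hZnile)) := by
    rintro u ⟨w, hw, rfl⟩
    have hdw : d w ∈ gr i := by
      have := hdeg _ w hw
      rwa [show i - 1 + 1 = i by ring] at this
    refine ⟨⟨d w, hdw⟩, LinearMap.mem_ker.mpr ?_, rfl⟩
    apply LinearMap.ext
    rintro ⟨z, hz⟩
    obtain ⟨hz1, hz2⟩ := Submodule.mem_inf.mp hz
    have hdz : d z = 0 := LinearMap.mem_ker.mp hz2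
    have h2 := hstokes w hw z hz1
    rw [hdz, mul_zero, smul_zero, add_zero] at h2
    simpa using congrArg φ h2
  have hKeq : Submodule.map d (gr (i-1))
      = Submodule.map (gr i).subtype (LinearMap.ker (pairT φ (gr i) hZnile)) :=
    Submodule.eq_of_le_of_finrank_le hBiK (by omega)
  -- `x` lies in `K`, hence is exact
  have hxK : x ∈ Submodule.map (gr i).subtype (LinearMap.ker (pairT φ (gr i) hZnile)) := by
    refine ⟨⟨x, hx⟩, LinearMap.mem_ker.mpr ?_, rfl⟩
    apply LinearMap.ext
    rintro ⟨z, hz⟩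
    obtain ⟨hz1, hz2⟩ := Submodule.mem_inf.mp hz
    have := hann z hz1 (LinearMap.mem_ker.mp hz2)
    simpa using congrArg φ this
  rw [← hKeq] at hxK
  obtain ⟨w, hw, hwd⟩ := hxK
  exact ⟨w, hw, hwd.symm⟩
end Key

-- extra lemmas, to be appended after key_exact
section Step

variable {V V' V'' : Type}
variable [CommRing V] [Algebra ℂ V] [CommRing V'] [Algebra ℂ V'] [CommRing V''] [Algebra ℂ V'']

/-- The differential of the next page vanishes in degree `n - 1`, because the
top cohomology two pages later is nontrivial. -/
lemma dtop_vanish (gr : ℤ → Submodule ℂ V) (gr' : ℤ → Submodule ℂ V')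
    (gr'' : ℤ → Submodule ℂ V'') (n : ℕ) (d : V →ₗ[ℂ] V) (d' : V' →ₗ[ℂ] V')
    (hbig : ∀ i : ℤ, (n:ℤ) < i → gr i = ⊥)
    (hvn : ∃ v : V, gr (n:ℤ) = Submodule.span ℂ {v})
    (hdeg' : ∀ i : ℤ, ∀ x ∈ gr' i, d' x ∈ gr' (i+1))
    (ρ : V →ₗ[ℂ] V')
    (hρsurj : ∀ i : ℤ, ∀ y ∈ gr' i, ∃ x ∈ gr i, d x = 0 ∧ ρ x = y)
    (ρ' : V' →ₗ[ℂ] V'')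
    (hρ'surj : ∀ i : ℤ, ∀ y ∈ gr'' i, ∃ x ∈ gr' i, d' x = 0 ∧ ρ' x = y)
    (hρ'ker : ∀ x, d' x = 0 → (ρ' x = 0 ↔ ∃ y, x = d' y))
    (hnontriv : ∃ u ∈ gr'' (n:ℤ), u ≠ 0) :
    ∀ a ∈ gr' ((n:ℤ) - 1), d' a = 0 := by
  obtain ⟨v, hvn⟩ := hvn
  have hbig' : ∀ i : ℤ, (n:ℤ) < i → gr' i = ⊥ := by
    intro i hi
    rw [eq_bot_iff]
    intro y hy
    obtain ⟨x, hx, _, rfl⟩ := hρsurj i y hy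
    rw [hbig i hi] at hx
    rw [(Submodule.mem_bot ℂ).mp hx, map_zero]
    exact Submodule.zero_mem ⊥
  have hspan' : ∀ x ∈ gr' (n:ℤ), ∃ c : ℂ, x = c • ρ v := by
    intro x hx
    obtain ⟨y, hy, _, rfl⟩ := hρsurj _ x hx
    rw [hvn, Submodule.mem_span_singleton] at hy
    obtain ⟨c, rfl⟩ := hy
    exact ⟨c, map_smul ρ c v⟩
  intro a ha
  by_contra hda
  have hdan : d' a ∈ gr' (n:ℤ) := by
    have := hdeg' _ a ha
    rwa [show (n:ℤ) - 1 + 1 = (n:ℤ) by ring] at this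
  obtain ⟨c, hc⟩ := hspan' _ hdan
  have hcne : c ≠ 0 := by
    rintro rfl
    rw [zero_smul] at hc
    exact hda hc
  have hρ'v : ∀ x ∈ gr' (n:ℤ), ρ' x = 0 := by
    intro x hx
    obtain ⟨c', hc'⟩ := hspan' _ hx
    have hd'x : d' x = 0 := by
      have := hdeg' _ x hx
      rw [hbig' _ (by omega)] at this
      simpa using this
    refine (hρ'ker x hd'x).mpr ⟨(c' * c⁻¹) • a, ?_⟩
    rw [map_smul, hc, smul_smul, mul_assoc, inv_mul_cancel₀ hcne, mul_one]
    exact hc'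
  obtain ⟨u, hu, hune⟩ := hnontriv
  obtain ⟨x, hx, _, rfl⟩ := hρ'surj _ u hu
  exact hune (hρ'v x hx)

/-- Harmonic compatibility forces the top-degree pieces to be nontrivial. -/
lemma harm_nontrivial {W V : Type} [CommRing W] [Algebra ℂ W] [CommRing V] [Algebra ℂ V]
    {grW : ℤ → Submodule ℂ W} {grV : ℤ → Submodule ℂ V} {n : ℕ}
    {dW : W →ₗ[ℂ] W} {dV : V →ₗ[ℂ] V} {f : W →ₗ[ℂ] V}
    (h : HarmonicCompatible grW grV n dW dV f) :
    (∃ u ∈ grV (n:ℤ), u ≠ 0) ∧ (∃ u ∈ grW (n:ℤ), u ≠ 0) := by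
  obtain ⟨hV, sV, vV, hW, sW, vW, hVadd, -, -, -, -, hvVmem, hvV1, -, -, -, -,
    hWadd, -, -, -, -, hvWmem, hvW1, -⟩ := h
  constructor
  · refine ⟨vV, hvVmem, fun hvv => ?_⟩
    have hzero : ∀ x : V, hV 0 x = 0 := by
      intro x
      have h0 := hVadd 0 0 x
      rw [add_zero] at h0
      have h2 : hV 0 x + 0 = hV 0 x + hV 0 x := by rw [add_zero]; exact h0
      exact (add_left_cancel h2).symm
    rw [hvv, hzero 0] at hvV1
    norm_num at hvV1
  · refine ⟨vW, hvWmem, fun hvv => ?_⟩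
    have hzero : ∀ x : W, hW 0 x = 0 := by
      intro x
      have h0 := hWadd 0 0 x
      rw [add_zero] at h0
      have h2 : hW 0 x + 0 = hW 0 x + hW 0 x := by rw [add_zero]; exact h0
      exact (add_left_cancel h2).symm
    rw [hvv, hzero 0] at hvW1
    norm_num at hvW1

end Step

section PDStep

/-- The cohomology page of a PD-type page is again PD-type, granted the
top-minus-one degree vanishing of the new differential. -/
lemma pd_step {V V' : Type} [CommRing V] [Algebra ℂ V] [FiniteDimensional ℂ V]
    [CommRing V'] [Algebra ℂ V']
    (gr : ℤ → Submodule ℂ V) [GradedAlgebra gr]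
    (gr' : ℤ → Submodule ℂ V') [GradedAlgebra gr']
    (n : ℕ) (d : V →ₗ[ℂ] V) (d' : V' →ₗ[ℂ] V')
    (hdeg : ∀ i : ℤ, ∀ x ∈ gr i, d x ∈ gr (i+1))
    (hleib : ∀ p : ℤ, ∀ x ∈ gr p, ∀ y, d (x*y) = d x * y + ((-1:ℂ)^p) • (x * d y))
    (hleib' : ∀ p : ℤ, ∀ x ∈ gr' p, ∀ y, d' (x*y) = d' x * y + ((-1:ℂ)^p) • (x * d' y))
    (hpd : IsPDTypeDGA gr n d)
    (ρ : V →ₗ[ℂ] V') (hρone : ρ 1 = 1)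
    (hρmul : ∀ x y, d x = 0 → d y = 0 → ρ (x*y) = ρ x * ρ y)
    (hρgr : ∀ i : ℤ, ∀ x ∈ gr i, d x = 0 → ρ x ∈ gr' i)
    (hρsurj : ∀ i : ℤ, ∀ y ∈ gr' i, ∃ x ∈ gr i, d x = 0 ∧ ρ x = y)
    (hρker : ∀ x, d x = 0 → (ρ x = 0 ↔ ∃ y, x = d y))
    (htopd' : ∀ a ∈ gr' ((n:ℤ) - 1), d' a = 0) :
    IsPDTypeDGA gr' n d' := by
  obtain ⟨hneg, hbig, h0, ⟨v, hv0, hvn⟩, hnd, htop1, hbot⟩ := hpd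
  have hpd' : IsPDTypeDGA gr n d := ⟨hneg, hbig, h0, ⟨v, hv0, hvn⟩, hnd, htop1, hbot⟩
  have hbot' : ∀ i : ℤ, (gr i = ⊥) → gr' i = ⊥ := by
    intro i hi
    rw [eq_bot_iff]
    intro y hy
    obtain ⟨x, hx, _, rfl⟩ := hρsurj i y hy
    rw [hi] at hx
    rw [(Submodule.mem_bot ℂ).mp hx, map_zero]
    exact Submodule.zero_mem ⊥
  have hd'one : d' (1 : V') = 0 := by
    have h := hleib' 0 1 (SetLike.one_mem_graded gr') 1
    rw [mul_one, mul_one, zpow_zero, one_smul, one_mul] at h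
    have h2 : d' (1:V') + 0 = d' (1:V') + d' (1:V') := by rw [add_zero]; exact h
    exact (add_left_cancel h2).symm
  refine ⟨fun i hi => hbot' i (hneg i hi), fun i hi => hbot' i (hbig i hi), ?_, ?_, ?_, htopd', ?_⟩
  · -- degree 0
    apply le_antisymm
    · intro y hy
      obtain ⟨x, hx, _, rfl⟩ := hρsurj 0 y hy
      rw [h0, Submodule.mem_span_singleton] at hx
      obtain ⟨c, rfl⟩ := hx
      rw [map_smul, hρone]
      exact Submodule.smul_mem _ c (Submodule.mem_span_singleton_self 1)
    · rw [Submodule.span_le, Set.singleton_subset_iff]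
      exact SetLike.one_mem_graded gr'
  · -- top degree
    have hvmem : v ∈ gr (n:ℤ) := by rw [hvn]; exact Submodule.mem_span_singleton_self v
    have hdv : d v = 0 := by
      have := hdeg _ v hvmem
      rw [hbig _ (by omega)] at this
      simpa using this
    refine ⟨ρ v, ?_, ?_⟩
    · intro hρv
      obtain ⟨y, hy⟩ := (hρker v hdv).mp hρv
      obtain ⟨w, hw, hvw⟩ := exact_proj gr d hdeg hvmem hy
      exact hv0 (by rw [hvw, htop1 w hw])
    · apply le_antisymm
      · intro y hy
        obtain ⟨x, hx, _, rfl⟩ := hρsurj _ y hy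
        rw [hvn, Submodule.mem_span_singleton] at hx
        obtain ⟨c, rfl⟩ := hx
        rw [map_smul]
        exact Submodule.smul_mem _ c (Submodule.mem_span_singleton_self _)
      · rw [Submodule.span_le, Set.singleton_subset_iff]
        exact hρgr _ v hvmem hdv
  · -- middle nondegeneracy
    intro i h0i hin a ha hab
    obtain ⟨x, hx, hdx, rfl⟩ := hρsurj i a ha
    have hann : ∀ z ∈ gr ((n:ℤ) - i), d z = 0 → x * z = 0 := by
      intro z hz hdz
      have hxz : x * z ∈ gr (n:ℤ) := by
        have := SetLike.mul_mem_graded hx hz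
        rwa [show i + ((n:ℤ) - i) = (n:ℤ) by ring] at this
      have hdxz : d (x * z) = 0 := by
        rw [hleib i x hx z, hdx, hdz, zero_mul, mul_zero, smul_zero, add_zero]
      have hρxz : ρ (x * z) = 0 := by
        rw [hρmul x z hdx hdz]
        exact hab (ρ z) (hρgr _ z hz hdz)
      obtain ⟨y, hy⟩ := (hρker _ hdxz).mp hρxz
      obtain ⟨w, hw, hxzw⟩ := exact_proj gr d hdeg hxz hy
      rw [hxzw, htop1 w hw]
    obtain ⟨w, _, hxw⟩ := key_exact gr n d hdeg hleib hpd' (by omega) (by omega) hx hann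
    exact (hρker x hdx).mpr ⟨w, hxw⟩
  · -- degree 0 vanishing of `d'`
    intro a ha
    have h00 : gr' 0 = Submodule.span ℂ {(1:V')} := by
      apply le_antisymm
      · intro y hy
        obtain ⟨x, hx, _, rfl⟩ := hρsurj 0 y hy
        rw [h0, Submodule.mem_span_singleton] at hx
        obtain ⟨c, rfl⟩ := hx
        rw [map_smul, hρone]
        exact Submodule.smul_mem _ c (Submodule.mem_span_singleton_self 1)
      · rw [Submodule.span_le, Set.singleton_subset_iff]
        exact SetLike.one_mem_graded gr'
    rw [h00, Submodule.mem_span_singleton] at ha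
    obtain ⟨c, rfl⟩ := ha
    rw [map_smul, hd'one, smul_zero]

end PDStep

section InjStep

/-- The induced map on the next page is injective. -/
lemma inj_step {W V W' V' : Type}
    [CommRing W] [Algebra ℂ W] [FiniteDimensional ℂ W] [CommRing V] [Algebra ℂ V]
    [CommRing W'] [Algebra ℂ W'] [CommRing V'] [Algebra ℂ V']
    (grW : ℤ → Submodule ℂ W) [GradedAlgebra grW]
    (grV : ℤ → Submodule ℂ V) [GradedAlgebra grV]
    (grW' : ℤ → Submodule ℂ W') [GradedAlgebra grW']
    (grV' : ℤ → Submodule ℂ V') [GradedAlgebra grV']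
    (n : ℕ) (dW : W →ₗ[ℂ] W) (dV : V →ₗ[ℂ] V)
    (hdegW : ∀ i : ℤ, ∀ x ∈ grW i, dW x ∈ grW (i+1))
    (hleibW : ∀ p : ℤ, ∀ x ∈ grW p, ∀ y, dW (x*y) = dW x * y + ((-1:ℂ)^p) • (x * dW y))
    (hdegV : ∀ i : ℤ, ∀ x ∈ grV i, dV x ∈ grV (i+1))
    (hleibV : ∀ p : ℤ, ∀ x ∈ grV p, ∀ y, dV (x*y) = dV x * y + ((-1:ℂ)^p) • (x * dV y))
    (hpdW : IsPDTypeDGA grW n dW)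
    (htop1V : ∀ a ∈ grV ((n:ℤ) - 1), dV a = 0)
    (f : W →ₗ[ℂ] V) (hfinj : Function.Injective f)
    (hfmul : ∀ x y, f (x * y) = f x * f y)
    (hfgr : ∀ i : ℤ, ∀ x ∈ grW i, f x ∈ grV i)
    (hfd : ∀ x, f (dW x) = dV (f x))
    (f' : W' →ₗ[ℂ] V')
    (ρW : W →ₗ[ℂ] W') (ρV : V →ₗ[ℂ] V')
    (hρWsurj : ∀ i : ℤ, ∀ y ∈ grW' i, ∃ x ∈ grW i, dW x = 0 ∧ ρW x = y)
    (hρWker : ∀ x, dW x = 0 → (ρW x = 0 ↔ ∃ y, x = dW y))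
    (hρVker : ∀ x, dV x = 0 → (ρV x = 0 ↔ ∃ y, x = dV y))
    (hf'gr : ∀ i : ℤ, ∀ x ∈ grW' i, f' x ∈ grV' i)
    (hfρ : ∀ x, dW x = 0 → f' (ρW x) = ρV (f x)) :
    Function.Injective f' := by
  have hgr : ∀ j : ℤ, ∀ u ∈ grW' j, f' u = 0 → u = 0 := by
    intro j u hu hfu
    obtain ⟨x, hx, hdx, rfl⟩ := hρWsurj j u hu
    by_cases hj : 0 ≤ j ∧ j ≤ (n:ℤ)
    · obtain ⟨hj0, hjn⟩ := hj
      -- `f x` is exact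
      have hfxcl : dV (f x) = 0 := by rw [← hfd, hdx, map_zero]
      have hρVfx : ρV (f x) = 0 := by rw [← hfρ x hdx]; exact hfu
      obtain ⟨y, hy⟩ := (hρVker (f x) hfxcl).mp hρVfx
      obtain ⟨w, hw, hfxw⟩ := exact_proj grV dV hdegV (hfgr j x hx) hy
      -- `x` annihilates every closed element of complementary degree
      have hann : ∀ z ∈ grW ((n:ℤ) - j), dW z = 0 → x * z = 0 := by
        intro z hz hdz
        apply hfinj
        rw [map_zero, hfmul, hfxw]
        have hfz : f z ∈ grV ((n:ℤ) - j) := hfgr _ z hz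
        have hdfz : dV (f z) = 0 := by rw [← hfd, hdz, map_zero]
        have hwfz : w * f z ∈ grV ((n:ℤ) - 1) := by
          have := SetLike.mul_mem_graded hw hfz
          rwa [show j - 1 + ((n:ℤ) - j) = (n:ℤ) - 1 by ring] at this
        have h1 : dV (w * f z) = dV w * f z := by
          rw [hleibV (j-1) w hw (f z), hdfz, mul_zero, smul_zero, add_zero]
        rw [← h1, htop1V _ hwfz]
      obtain ⟨w', _, hxw'⟩ := key_exact grW n dW hdegW hleibW hpdW hj0 hjn hx hann
      exact (hρWker x hdx).mpr ⟨w', hxw'⟩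
    · -- outside the range `[0, n]` the page vanishes
      obtain ⟨hneg, hbig, -⟩ := hpdW
      have hxbot : x = 0 := by
        rcases not_and_or.mp hj with hj' | hj'
        · have := hneg j (by omega)
          rw [this] at hx
          exact (Submodule.mem_bot ℂ).mp hx
        · have := hbig j (by omega)
          rw [this] at hx
          exact (Submodule.mem_bot ℂ).mp hx
      rw [hxbot, map_zero]
  apply (injective_iff_map_eq_zero f').mpr
  intro u hu
  obtain ⟨S, hS⟩ := sum_grProj grW' u
  have hcomp : ∀ j ∈ S, f' (grProj grW' j u) = 0 := by
    intro j hj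
    have h1 : f' u = ∑ k ∈ S, f' (grProj grW' k u) := by
      rw [← map_sum, hS]
    have h2 : grProj grV' j (f' u) = f' (grProj grW' j u) := by
      rw [h1, map_sum]
      rw [Finset.sum_eq_single_of_mem j hj]
      · exact grProj_of_mem_same grV' (hf'gr j _ (grProj_mem grW' j u))
      · intro k hk hkj
        exact grProj_of_mem_ne grV' (hf'gr k _ (grProj_mem grW' k u)) hkj
    rw [← h2, hu, map_zero]
  have : ∀ j ∈ S, grProj grW' j u = 0 := fun j hj =>
    hgr j _ (grProj_mem grW' j u) (hcomp j hj)
  rw [← hS, Finset.sum_eq_zero this]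

end InjStep

/-- Let `(A^{*,*}, ∂, ∂̄)` be a finite-dimensional bidifferential
bigraded algebra whose total complex is a finite-dimensional DGA of PD-type, and
`B ⊆ A` a sub-BBA with the same property, with harmonic theories compatible at
every stage.  The pages of the associated spectral sequences (filtering by the
first degree), presented here through their defining interface — `E₀(A) = Tot A`,
`E₀(B) = Tot B`, each page a finite-dimensional graded commutative `ℂ`-algebra
with differential `d_r` (a derivation of degree `+1`), the page maps
`ρ_r : E_r → E_{r+1}` realizing each next page as the cohomology of the previous
one, and the morphisms `f_r : E_r(B) → E_r(A)` induced by the inclusion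
`B ⊆ A` — satisfy: for every `r`, `Tot E_r(A)` and `Tot E_r(B)` are
finite-dimensional DGAs of PD-type, and `f_r : E_r(B) → E_r(A)` is injective. -/
theorem pd_bba_spectral_sequence_pages_pd_and_injective
    (n : ℕ) (hn : 1 ≤ n)
    (EA EB : ℕ → Type)
    [∀ r, CommRing (EA r)] [∀ r, Algebra ℂ (EA r)] [∀ r, FiniteDimensional ℂ (EA r)]
    [∀ r, CommRing (EB r)] [∀ r, Algebra ℂ (EB r)] [∀ r, FiniteDimensional ℂ (EB r)]
    (grA : ∀ r : ℕ, ℤ → Submodule ℂ (EA r)) [∀ r, GradedAlgebra (grA r)]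
    (grB : ∀ r : ℕ, ℤ → Submodule ℂ (EB r)) [∀ r, GradedAlgebra (grB r)]
    (gradedCommA : ∀ (r : ℕ) (p q : ℤ), ∀ a ∈ grA r p, ∀ b ∈ grA r q,
      a * b = ((-1 : ℂ) ^ (p * q)) • (b * a))
    (gradedCommB : ∀ (r : ℕ) (p q : ℤ), ∀ a ∈ grB r p, ∀ b ∈ grB r q,
      a * b = ((-1 : ℂ) ^ (p * q)) • (b * a))
    -- each page carries a differential `d_r` of total degree `+1`
    (dA : ∀ r : ℕ, EA r →ₗ[ℂ] EA r) (dB : ∀ r : ℕ, EB r →ₗ[ℂ] EB r)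
    (hdAdeg : ∀ (r : ℕ) (i : ℤ), ∀ x ∈ grA r i, dA r x ∈ grA r (i + 1))
    (hdBdeg : ∀ (r : ℕ) (i : ℤ), ∀ x ∈ grB r i, dB r x ∈ grB r (i + 1))
    (hdAsq : ∀ r x, dA r (dA r x) = 0) (hdBsq : ∀ r x, dB r (dB r x) = 0)
    (hleibA : ∀ (r : ℕ) (p : ℤ), ∀ x ∈ grA r p, ∀ y,
      dA r (x * y) = dA r x * y + ((-1 : ℂ) ^ p) • (x * dA r y))
    (hleibB : ∀ (r : ℕ) (p : ℤ), ∀ x ∈ grB r p, ∀ y,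
      dB r (x * y) = dB r x * y + ((-1 : ℂ) ^ p) • (x * dB r y))
    -- page zero: the total complexes of `A` and of `B` are PD-type DGAs
    (hA0 : IsPDTypeDGA (grA 0) n (dA 0))
    (hB0 : IsPDTypeDGA (grB 0) n (dB 0))
    -- page passage: `E_{r+1}` is the cohomology of `(E_r, d_r)`
    (ρA : ∀ r : ℕ, EA r →ₗ[ℂ] EA (r + 1))
    (ρB : ∀ r : ℕ, EB r →ₗ[ℂ] EB (r + 1))
    (hρAone : ∀ r, ρA r 1 = 1) (hρBone : ∀ r, ρB r 1 = 1)
    (hρAmul : ∀ r x y, dA r x = 0 → dA r y = 0 → ρA r (x * y) = ρA r x * ρA r y)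
    (hρBmul : ∀ r x y, dB r x = 0 → dB r y = 0 → ρB r (x * y) = ρB r x * ρB r y)
    (hρAgr : ∀ (r : ℕ) (i : ℤ), ∀ x ∈ grA r i, dA r x = 0 → ρA r x ∈ grA (r + 1) i)
    (hρBgr : ∀ (r : ℕ) (i : ℤ), ∀ x ∈ grB r i, dB r x = 0 → ρB r x ∈ grB (r + 1) i)
    (hρAsurj : ∀ (r : ℕ) (i : ℤ), ∀ y ∈ grA (r + 1) i,
      ∃ x ∈ grA r i, dA r x = 0 ∧ ρA r x = y)
    (hρBsurj : ∀ (r : ℕ) (i : ℤ), ∀ y ∈ grB (r + 1) i,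
      ∃ x ∈ grB r i, dB r x = 0 ∧ ρB r x = y)
    (hρAker : ∀ r x, dA r x = 0 → (ρA r x = 0 ↔ ∃ y, x = dA r y))
    (hρBker : ∀ r x, dB r x = 0 → (ρB r x = 0 ↔ ∃ y, x = dB r y))
    -- the morphism of spectral sequences induced by the inclusion `B ⊆ A`
    (f : ∀ r : ℕ, EB r →ₗ[ℂ] EA r)
    (hfone : ∀ r, f r 1 = 1)
    (hfmul : ∀ r x y, f r (x * y) = f r x * f r y)
    (hfgr : ∀ (r : ℕ) (i : ℤ), ∀ x ∈ grB r i, f r x ∈ grA r i)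
    (hfd : ∀ r x, f r (dB r x) = dA r (f r x))
    (hf0 : Function.Injective (f 0))
    (hfρ : ∀ r x, dB r x = 0 → f (r + 1) (ρB r x) = ρA r (f r x))
    -- harmonic compatibility at every stage
    (hharm : ∀ r : ℕ, HarmonicCompatible (grB r) (grA r) n (dB r) (dA r) (f r)) :
    ∀ r : ℕ,
      IsPDTypeDGA (grA r) n (dA r) ∧
      IsPDTypeDGA (grB r) n (dB r) ∧
      Function.Injective (f r) := by
  intro r
  induction r with
  | zero => exact ⟨hA0, hB0, hf0⟩
  | succ r ih =>
    obtain ⟨hpdA, hpdB, hinj⟩ := ih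
    have hnt := harm_nontrivial (hharm (r+2))
    have htopA : ∀ a ∈ grA (r+1) ((n:ℤ) - 1), dA (r+1) a = 0 := by
      obtain ⟨v, -, hv⟩ := hpdA.2.2.2.1
      exact dtop_vanish (grA r) (grA (r+1)) (grA (r+2)) n (dA r) (dA (r+1))
        hpdA.2.1 ⟨v, hv⟩ (hdAdeg (r+1)) (ρA r) (hρAsurj r) (ρA (r+1)) (hρAsurj (r+1))
        (hρAker (r+1)) hnt.1
    have htopB : ∀ a ∈ grB (r+1) ((n:ℤ) - 1), dB (r+1) a = 0 := by
      obtain ⟨v, -, hv⟩ := hpdB.2.2.2.1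
      exact dtop_vanish (grB r) (grB (r+1)) (grB (r+2)) n (dB r) (dB (r+1))
        hpdB.2.1 ⟨v, hv⟩ (hdBdeg (r+1)) (ρB r) (hρBsurj r) (ρB (r+1)) (hρBsurj (r+1))
        (hρBker (r+1)) hnt.2
    refine ⟨?_, ?_, ?_⟩
    · exact pd_step (grA r) (grA (r+1)) n (dA r) (dA (r+1)) (hdAdeg r) (hleibA r)
        (hleibA (r+1)) hpdA (ρA r) (hρAone r) (hρAmul r) (hρAgr r) (hρAsurj r)
        (hρAker r) htopA
    · exact pd_step (grB r) (grB (r+1)) n (dB r) (dB (r+1)) (hdBdeg r) (hleibB r)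
        (hleibB (r+1)) hpdB (ρB r) (hρBone r) (hρBmul r) (hρBgr r) (hρBsurj r)
        (hρBker r) htopB
    · exact inj_step (grB r) (grA r) (grB (r+1)) (grA (r+1)) n (dB r) (dA r)
        (hdBdeg r) (hleibB r) (hdAdeg r) (hleibA r) hpdB hpdA.2.2.2.2.2.1
        (f r) hinj (hfmul r) (hfgr r) (hfd r) (f (r+1)) (ρB r) (ρA r)
        (hρBsurj r) (hρBker r) (hρAker r) (hfgr (r+1)) (hfρ r)
end
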